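/- arXiv:1905.12744 — 3 statements merged into one kernel-verified Lean document; each statement's English description precedes it below -/
import Mathlib

section
/- Let k ≥ 1 be an integer, ε > 0, and δ ∈ (0,1). Let x_1, …, x_k be nonnegative real numbers (the true counts) with n = Σ_{i=1}^k x_i > 0. Let L_1, …, L_k be independent random variables, each Laplace-distributed with location 0 and scale 1/ε, and set x̃_i = x_i + L_i and ñ = Σ_{i=1}^k x̃_i. Define the slack variables Δ = ln(2k/δ)/ε and Δ' = k·ln(2k²/δ)/ε. Then with probability at least 1 − δ, simultaneously for every index i ∈ {1,…,k}: x_i · (ñ − Δ') ≤ n · (x̃_i + Δ). (Equivalently, whenever ñ − Δ' > 0, the inflated allocation share (x̃_i + Δ)/(ñ − Δ') is at least the true allocation share x_i/n for every i, so the inflationary repair algorithm is a no-penalty allocation with failure probability at most δ.) -/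
open MeasureTheory ProbabilityTheory

/-- The Laplace distribution with location 0 and scale `b`, as the measure on `ℝ`
with density `(1/(2b)) · exp (−|t|/b)` with respect to Lebesgue measure. -/
noncomputable def laplaceMeasure (b : ℝ) : Measure ℝ :=
  MeasureTheory.volume.withDensity
    (fun t => ENNReal.ofReal ((1 / (2 * b)) * Real.exp (-|t| / b)))

open Set in
lemma laplace_tail_le {ε a : ℝ} (hε : 0 < ε) (ha : 0 ≤ a) :
    laplaceMeasure (1/ε) {t : ℝ | a < |t|} ≤ ENNReal.ofReal (Real.exp (-(ε * a))) := by
  have hS : MeasurableSet {t : ℝ | a < |t|} :=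
    measurableSet_lt measurable_const measurable_id.abs
  have hIoi : ∫⁻ t in Ioi a,
      ENNReal.ofReal ((1 / (2 * (1/ε))) * Real.exp (-|t| / (1/ε))) =
      ENNReal.ofReal (Real.exp (-(ε * a)) / 2) := by
    have h1 : ∀ t ∈ Ioi a,
        ENNReal.ofReal ((1 / (2 * (1/ε))) * Real.exp (-|t| / (1/ε))) =
        ENNReal.ofReal ((ε/2) * Real.exp (-ε * t)) := by
      intro t ht
      have habs : |t| = t := abs_of_nonneg (le_trans ha (le_of_lt ht))
      have harg : -t / (1/ε) = -ε * t := by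
        field_simp
      have hco : 1 / (2 * (1/ε)) = ε / 2 := by
        field_simp
      rw [habs, harg, hco]
    rw [setLIntegral_congr_fun measurableSet_Ioi h1]
    have hint : IntegrableOn (fun t => (ε/2) * Real.exp (-ε * t)) (Ioi a) :=
      (exp_neg_integrableOn_Ioi a hε).const_mul (ε/2)
    rw [← ofReal_integral_eq_lintegral_ofReal hint
        (Filter.Eventually.of_forall fun t => by positivity)]
    congr 1
    rw [MeasureTheory.integral_const_mul]
    have : ∀ t : ℝ, Real.exp (-ε * t) = Real.exp (-(ε * t)) := fun t => by ring_nf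
    simp_rw [this]
    rw [integral_comp_mul_left_Ioi (fun u => Real.exp (-u)) a hε]
    simp only [smul_eq_mul, integral_exp_neg_Ioi]
    field_simp
  have hIic : ∫⁻ t in Iic (-a),
      ENNReal.ofReal ((1 / (2 * (1/ε))) * Real.exp (-|t| / (1/ε))) =
      ENNReal.ofReal (Real.exp (-(ε * a)) / 2) := by
    have hmp : MeasurePreserving (Neg.neg : ℝ → ℝ) volume volume :=
      Measure.measurePreserving_neg volume
    have := hmp.setLIntegral_comp_preimage_emb (Homeomorph.neg ℝ).measurableEmbedding
      (fun t => ENNReal.ofReal ((1 / (2 * (1/ε))) * Real.exp (-|t| / (1/ε)))) (Iic (-a))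
    rw [← this]
    have hpre : (Neg.neg : ℝ → ℝ) ⁻¹' (Iic (-a)) = Ici a := by
      ext t; simp [neg_le_neg_iff]
    rw [hpre]
    rw [setLIntegral_congr Ioi_ae_eq_Ici.symm] at *
    rw [← hIoi]
    apply lintegral_congr
    intro t
    simp [abs_neg]
  calc laplaceMeasure (1/ε) {t : ℝ | a < |t|}
      = ∫⁻ t in {t : ℝ | a < |t|},
          ENNReal.ofReal ((1 / (2 * (1/ε))) * Real.exp (-|t| / (1/ε))) := by
        rw [laplaceMeasure, withDensity_apply _ hS]
    _ ≤ ∫⁻ t in Iic (-a) ∪ Ioi a,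
          ENNReal.ofReal ((1 / (2 * (1/ε))) * Real.exp (-|t| / (1/ε))) := by
        apply lintegral_mono_set
        intro t ht
        rcases lt_abs.mp (mem_setOf.mp ht) with h | h
        · exact Or.inr h
        · exact Or.inl (by simpa using le_of_lt (lt_neg.mp h))
    _ ≤ (∫⁻ t in Iic (-a),
          ENNReal.ofReal ((1 / (2 * (1/ε))) * Real.exp (-|t| / (1/ε)))) +
        ∫⁻ t in Ioi a,
          ENNReal.ofReal ((1 / (2 * (1/ε))) * Real.exp (-|t| / (1/ε))) :=
        lintegral_union_le _ _ _
    _ = ENNReal.ofReal (Real.exp (-(ε * a)) / 2) +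
        ENNReal.ofReal (Real.exp (-(ε * a)) / 2) := by rw [hIic, hIoi]
    _ = ENNReal.ofReal (Real.exp (-(ε * a))) := by
        rw [← ENNReal.ofReal_add (by positivity) (by positivity)]
        ring_nf


/-- the inflationary repair algorithm is a no-penalty allocation.
With `x̃ i = x i + L i` (independent Laplace(0,1/ε) noise), `ñ = Σ x̃ i`,
`Δ = ln(2k/δ)/ε` and `Δ' = k·ln(2k²/δ)/ε`, with probability at least `1 − δ`,
simultaneously for every `i`: `x i · (ñ − Δ') ≤ n · (x̃ i + Δ)`. -/
theorem no_penalty_allocation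
    {Ω : Type*} [MeasurableSpace Ω] (μ : Measure Ω) [IsProbabilityMeasure μ]
    (k : ℕ) (hk : 1 ≤ k) (ε δ : ℝ) (hε : 0 < ε) (hδ0 : 0 < δ) (hδ1 : δ < 1)
    (x : Fin k → ℝ) (hx : ∀ i, 0 ≤ x i) (hn : 0 < ∑ i, x i)
    (L : Fin k → Ω → ℝ) (hL : ∀ i, Measurable (L i))
    (hindep : iIndepFun L μ)
    (hmap : ∀ i, μ.map (L i) = laplaceMeasure (1 / ε)) :
    ENNReal.ofReal (1 - δ) ≤
      μ {ω | ∀ i : Fin k,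
        x i * ((∑ j, (x j + L j ω)) - (k : ℝ) * Real.log (2 * (k : ℝ) ^ 2 / δ) / ε)
          ≤ (∑ j, x j) * ((x i + L i ω) + Real.log (2 * (k : ℝ) / δ) / ε)} := by
  have hk1 : (1 : ℝ) ≤ (k : ℝ) := by exact_mod_cast hk
  have hkpos : (0 : ℝ) < (k : ℝ) := by linarith
  set D : ℝ := Real.log (2 * (k : ℝ) / δ) / ε with hD
  set B : ℝ := Real.log (2 * (k : ℝ) ^ 2 / δ) / ε with hB
  have h2kδ : (1 : ℝ) ≤ 2 * (k : ℝ) / δ := by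
    rw [le_div_iff₀ hδ0]; nlinarith
  have h2kδpos : (0 : ℝ) < 2 * (k : ℝ) / δ := by positivity
  have hDnn : 0 ≤ D := div_nonneg (Real.log_nonneg h2kδ) hε.le
  have hDB : D ≤ B := by
    have hfrac : 2 * (k : ℝ) / δ ≤ 2 * (k : ℝ) ^ 2 / δ :=
      (div_le_div_iff_of_pos_right hδ0).mpr (by nlinarith)
    have hlog : Real.log (2 * (k : ℝ) / δ) ≤ Real.log (2 * (k : ℝ) ^ 2 / δ) :=
      Real.log_le_log h2kδpos hfrac
    rw [hD, hB]
    exact (div_le_div_iff_of_pos_right hε).mpr hlog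
  -- the good event
  set E : Set Ω := ⋂ i : Fin k, {ω | |L i ω| ≤ D} with hE
  have hEmeas : ∀ i : Fin k, MeasurableSet {ω | |L i ω| ≤ D} := fun i =>
    measurableSet_le (hL i).abs measurable_const
  have hEsub : E ⊆ {ω | ∀ i : Fin k,
      x i * ((∑ j, (x j + L j ω)) - (k : ℝ) * Real.log (2 * (k : ℝ) ^ 2 / δ) / ε)
        ≤ (∑ j, x j) * ((x i + L i ω) + Real.log (2 * (k : ℝ) / δ) / ε)} := by
    intro ω hω i
    have h : ∀ j : Fin k, |L j ω| ≤ D := fun j => Set.mem_iInter.mp hω j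
    have hSsum : (∑ j, L j ω) ≤ (k : ℝ) * D := by
      calc (∑ j, L j ω) ≤ ∑ _j : Fin k, D :=
            Finset.sum_le_sum fun j _ => le_trans (le_abs_self _) (h j)
        _ = (k : ℝ) * D := by
            rw [Finset.sum_const, Finset.card_univ, Fintype.card_fin, nsmul_eq_mul]
    have hLi : -D ≤ L i ω := neg_le_of_abs_le (h i)
    have hsum : (∑ j, (x j + L j ω)) = (∑ j, x j) + ∑ j, L j ω :=
      Finset.sum_add_distrib
    have hkB : (k : ℝ) * Real.log (2 * (k : ℝ) ^ 2 / δ) / ε = (k : ℝ) * B := by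
      rw [hB]; ring
    rw [hsum, hkB, ← hD]
    have hkDB : (k : ℝ) * D ≤ (k : ℝ) * B :=
      mul_le_mul_of_nonneg_left hDB hkpos.le
    nlinarith [hx i, hn, mul_le_mul_of_nonneg_left
        (show (∑ j, x j) + (∑ j, L j ω) - (k : ℝ) * B ≤ (∑ j, x j) by linarith) (hx i),
      mul_le_mul_of_nonneg_left (show (0:ℝ) ≤ L i ω + D by linarith) hn.le]
  -- probability of the bad event
  have htail : ∀ i : Fin k, μ {ω | D < |L i ω|} ≤ ENNReal.ofReal (δ / (2 * k)) := by
    intro i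
    have hSmeas : MeasurableSet {t : ℝ | D < |t|} :=
      measurableSet_lt measurable_const measurable_id.abs
    have : μ {ω | D < |L i ω|} = (μ.map (L i)) {t : ℝ | D < |t|} := by
      rw [Measure.map_apply (hL i) hSmeas]; rfl
    rw [this, hmap i]
    refine le_trans (laplace_tail_le hε hDnn) ?_
    have : Real.exp (-(ε * D)) = δ / (2 * k) := by
      have : ε * D = Real.log (2 * (k : ℝ) / δ) := by
        rw [hD]; field_simp
      rw [this, Real.exp_neg, Real.exp_log h2kδpos, inv_div]
    rw [this]
  have hcompl : μ Eᶜ ≤ ENNReal.ofReal (δ / 2) := by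
    have hEc : Eᶜ = ⋃ i : Fin k, {ω | D < |L i ω|} := by
      rw [hE, Set.compl_iInter]
      ext ω; simp [not_le]
    rw [hEc]
    calc μ (⋃ i : Fin k, {ω | D < |L i ω|}) ≤ ∑' i : Fin k, μ {ω | D < |L i ω|} :=
          measure_iUnion_le _
      _ = ∑ i : Fin k, μ {ω | D < |L i ω|} := tsum_fintype _
      _ ≤ ∑ _i : Fin k, ENNReal.ofReal (δ / (2 * k)) := Finset.sum_le_sum fun i _ => htail i
      _ = (k : ℕ) • ENNReal.ofReal (δ / (2 * k)) := by
          rw [Finset.sum_const, Finset.card_univ, Fintype.card_fin]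
      _ = ENNReal.ofReal (δ / 2) := by
          rw [nsmul_eq_mul, ← ENNReal.ofReal_natCast, ← ENNReal.ofReal_mul (by positivity)]
          congr 1
          field_simp
  have hEmeas' : MeasurableSet E := MeasurableSet.iInter fun i => hEmeas i
  have hmuE : ENNReal.ofReal (1 - δ) ≤ μ E := by
    have h1 : μ E = 1 - μ Eᶜ := by
      rw [measure_compl hEmeas' (measure_ne_top μ E), measure_univ]
      rw [ENNReal.sub_sub_cancel ENNReal.one_ne_top (prob_le_one)]
    rw [h1]
    refine ENNReal.le_sub_of_add_le_right (measure_ne_top μ _) ?_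
    calc ENNReal.ofReal (1 - δ) + μ Eᶜ
        ≤ ENNReal.ofReal (1 - δ) + ENNReal.ofReal (δ / 2) :=
          add_le_add le_rfl hcompl
      _ = ENNReal.ofReal (1 - δ + δ / 2) := by
          rw [← ENNReal.ofReal_add (by linarith) (by positivity)]
      _ ≤ 1 := by
          rw [← ENNReal.ofReal_one]
          exact ENNReal.ofReal_le_ofReal (by linarith)
  exact le_trans hmuE (measure_mono hEsub)
end

section
/- Let k ≥ 1 be an integer, ε > 0, and δ ∈ (0,1). Let x_1, …, x_k be nonnegative real numbers with n = Σ_{i=1}^k x_i, let L_1, …, L_k be independent random variables each Laplace-distributed with location 0 and scale 1/ε, and set x̃_i = x_i + L_i and ñ = Σ_{i=1}^k x̃_i. With Δ = ln(2k/δ)/ε and Δ' = k·ln(2k²/δ)/ε, for each fixed index i ∈ {1,…,k}: Pr[x_i · (ñ − Δ') > n · (x̃_i + Δ)] ≤ δ/k. -/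
open MeasureTheory ProbabilityTheory

open Set Real in
lemma integral_exp_neg_mul_Ioi' {r : ℝ} (hr : 0 < r) (c : ℝ) :
    ∫ x in Set.Ioi c, Real.exp (-(r * x)) = Real.exp (-(r * c)) / r := by
  have hderiv : ∀ x ∈ Ici c, HasDerivAt (fun y => -exp (-(r * y)) / r) (exp (-(r * x))) x := by
    intro x _
    have h := (ProbabilityTheory.hasDerivAt_neg_exp_mul_exp (r := r) (x := x)).div_const r
    convert h using 1
    · rfl
    · rfl
    · field_simp
  have htop : Filter.Tendsto (fun y => -exp (-(r * y)) / r) Filter.atTop (nhds 0) := by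
    have : Filter.Tendsto (fun y => -(r * y)) Filter.atTop Filter.atBot :=
      Filter.tendsto_neg_atBot_iff.mpr (Filter.tendsto_atTop_atTop_of_monotone
        (fun a b hab => by nlinarith) (fun b => ⟨b / r, by field_simp; exact le_rfl⟩))
    have h2 := (Real.tendsto_exp_atBot.comp this).neg.div_const r
    simpa using h2
  have hint : IntegrableOn (fun x => exp (-(r * x))) (Ioi c) := by
    simpa [neg_mul] using exp_neg_integrableOn_Ioi c hr
  have := MeasureTheory.integral_Ioi_of_hasDerivAt_of_tendsto' hderiv hint htop
  rw [this]
  ring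

open Set Real in
lemma lap_tail_Ioi {b : ℝ} (hb : 0 < b) {c : ℝ} (hc : 0 ≤ c) :
    laplaceMeasure b (Set.Ioi c) = ENNReal.ofReal (exp (-c / b) / 2) := by
  have hmeas : Measurable fun t : ℝ => ENNReal.ofReal ((1 / (2 * b)) * exp (-|t| / b)) := by
    fun_prop
  rw [laplaceMeasure, withDensity_apply _ measurableSet_Ioi]
  have h1 : ∫⁻ t in Ioi c, ENNReal.ofReal ((1 / (2 * b)) * exp (-|t| / b))
      = ∫⁻ t in Ioi c, ENNReal.ofReal ((1 / (2 * b)) * exp (-((1/b) * t))) := by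
    refine setLIntegral_congr_fun measurableSet_Ioi ?_
    intro t ht
    have : |t| = t := abs_of_pos (lt_of_le_of_lt hc ht)
    simp only [this]
    congr 2
    field_simp
  rw [h1]
  have hint : IntegrableOn (fun t => (1 / (2 * b)) * exp (-((1/b) * t))) (Ioi c) := by
    have h := exp_neg_integrableOn_Ioi c (show (0:ℝ) < 1/b by positivity)
    simp only [neg_mul] at h
    exact h.const_mul _
  rw [← MeasureTheory.ofReal_integral_eq_lintegral_ofReal hint
    (Filter.Eventually.of_forall fun t => by positivity)]
  congr 1
  rw [MeasureTheory.integral_const_mul, integral_exp_neg_mul_Ioi' (by positivity : (0:ℝ) < 1/b)]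
  have : -((1:ℝ)/b * c) = -c / b := by ring
  rw [this]
  field_simp

open Set Real in
lemma lap_tail_Iio {b : ℝ} (hb : 0 < b) {c : ℝ} (hc : 0 ≤ c) :
    laplaceMeasure b (Set.Iio (-c)) = ENNReal.ofReal (exp (-c / b) / 2) := by
  have hne : MeasurableEmbedding (fun x : ℝ => -x) :=
    (Homeomorph.neg ℝ).measurableEmbedding
  have hmp : MeasurePreserving (fun x : ℝ => -x) volume volume :=
    Measure.measurePreserving_neg _
  rw [laplaceMeasure, withDensity_apply _ measurableSet_Iio]
  have key := hmp.setLIntegral_comp_preimage_emb hne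
    (fun t => ENNReal.ofReal ((1 / (2 * b)) * exp (-|t| / b))) (Iio (-c))
  have hpre : (fun x : ℝ => -x) ⁻¹' Iio (-c) = Ioi c := by
    ext t; simp
  rw [hpre] at key
  have hsymm : ∀ a : ℝ, ENNReal.ofReal ((1 / (2 * b)) * Real.exp (-|(-a)| / b))
      = ENNReal.ofReal ((1 / (2 * b)) * Real.exp (-|a| / b)) := by
    intro a; rw [abs_neg]
  simp only [hsymm] at key
  rw [← key, ← withDensity_apply _ measurableSet_Ioi, ← laplaceMeasure]
  exact lap_tail_Ioi hb hc

/-- the per-index failure bound for the inflationary repair algorithm.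
With `x̃ i = x i + L i` (independent Laplace(0,1/ε) noise), `ñ = Σ x̃ j`,
`Δ = ln(2k/δ)/ε` and `Δ' = k·ln(2k²/δ)/ε`, for each fixed index `i`:
`Pr[x i · (ñ − Δ') > n · (x̃ i + Δ)] ≤ δ/k`. -/
theorem per_index_failure_bound
    {Ω : Type*} [MeasurableSpace Ω] (μ : Measure Ω) [IsProbabilityMeasure μ]
    (k : ℕ) (hk : 1 ≤ k) (ε δ : ℝ) (hε : 0 < ε) (hδ0 : 0 < δ) (hδ1 : δ < 1)
    (x : Fin k → ℝ) (hx : ∀ i, 0 ≤ x i)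
    (L : Fin k → Ω → ℝ) (hL : ∀ i, Measurable (L i))
    (hindep : iIndepFun L μ)
    (hmap : ∀ i, μ.map (L i) = laplaceMeasure (1 / ε))
    (i : Fin k) :
    μ {ω |
        (∑ j, x j) * ((x i + L i ω) + Real.log (2 * (k : ℝ) / δ) / ε)
          < x i * ((∑ j, (x j + L j ω)) - (k : ℝ) * Real.log (2 * (k : ℝ) ^ 2 / δ) / ε)}
      ≤ ENNReal.ofReal (δ / k) := by
  have hkpos : (0:ℝ) < k := by exact_mod_cast hk
  have hk1 : (1:ℝ) ≤ k := by exact_mod_cast hk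
  set Δ : ℝ := Real.log (2 * (k : ℝ) / δ) / ε with hΔdef
  set c : ℝ := Real.log (2 * (k : ℝ) ^ 2 / δ) / ε with hcdef
  have hΔ0 : 0 ≤ Δ := by
    apply div_nonneg _ hε.le
    apply Real.log_nonneg
    rw [le_div_iff₀ hδ0]
    nlinarith [hk1, hδ1]
  have hc0 : 0 ≤ c := by
    apply div_nonneg _ hε.le
    apply Real.log_nonneg
    rw [le_div_iff₀ hδ0]
    nlinarith [hk1, hδ1, sq_nonneg ((k:ℝ) - 1)]
  -- event inclusion
  have hincl : {ω : Ω |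
        (∑ j, x j) * ((x i + L i ω) + Real.log (2 * (k : ℝ) / δ) / ε)
          < x i * ((∑ j, (x j + L j ω)) - (k : ℝ) * Real.log (2 * (k : ℝ) ^ 2 / δ) / ε)}
      ⊆ {ω : Ω | L i ω < -Δ} ∪ ⋃ j, {ω : Ω | c < L j ω} := by
    intro ω hω
    simp only [Set.mem_setOf_eq] at hω
    by_contra hcon
    simp only [Set.mem_union, Set.mem_iUnion, Set.mem_setOf_eq, not_or, not_exists, not_lt] at hcon
    obtain ⟨h1, h2⟩ := hcon
    have hn : 0 ≤ ∑ j, x j := Finset.sum_nonneg fun j _ => hx j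
    have hS : ∑ j, (x j + L j ω) = (∑ j, x j) + ∑ j, L j ω := Finset.sum_add_distrib
    have hsum : ∑ j, L j ω ≤ (k : ℝ) * c := by
      calc ∑ j, L j ω ≤ ∑ _j : Fin k, c := Finset.sum_le_sum fun j _ => h2 j
        _ = (k : ℝ) * c := by
          rw [Finset.sum_const, Finset.card_univ, Fintype.card_fin, nsmul_eq_mul]
    have hkc : (k : ℝ) * Real.log (2 * (k : ℝ) ^ 2 / δ) / ε = (k : ℝ) * c := by
      rw [hcdef, mul_div_assoc]
    rw [hkc, hS] at hω
    have hA : (∑ j, x j) * (x i) ≤ (∑ j, x j) * ((x i + L i ω) + Δ) :=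
      mul_le_mul_of_nonneg_left (by linarith) hn
    have hB : x i * ((∑ j, x j) + (∑ j, L j ω) - (k : ℝ) * c) ≤ x i * (∑ j, x j) :=
      mul_le_mul_of_nonneg_left (by linarith) (hx i)
    rw [← hΔdef] at hω
    nlinarith [hω, hA, hB]
  -- tail probabilities
  have hb : (0:ℝ) < 1 / ε := by positivity
  have hμA : μ {ω : Ω | L i ω < -Δ} = ENNReal.ofReal (δ / (4 * k)) := by
    have : {ω : Ω | L i ω < -Δ} = L i ⁻¹' (Set.Iio (-Δ)) := rfl
    rw [this, ← Measure.map_apply (hL i) measurableSet_Iio, hmap i, lap_tail_Iio hb hΔ0]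
    congr 1
    have he : -Δ / (1 / ε) = -Real.log (2 * (k : ℝ) / δ) := by
      rw [hΔdef]; field_simp
    rw [he, Real.exp_neg, Real.exp_log (by positivity)]
    rw [inv_div]
    ring
  have hμB : ∀ j, μ {ω : Ω | c < L j ω} = ENNReal.ofReal (δ / (4 * k ^ 2)) := by
    intro j
    have : {ω : Ω | c < L j ω} = L j ⁻¹' (Set.Ioi c) := rfl
    rw [this, ← Measure.map_apply (hL j) measurableSet_Ioi, hmap j, lap_tail_Ioi hb hc0]
    congr 1
    have he : -c / (1 / ε) = -Real.log (2 * (k : ℝ) ^ 2 / δ) := by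
      rw [hcdef]; field_simp
    rw [he, Real.exp_neg, Real.exp_log (by positivity)]
    rw [inv_div]
    ring
  calc μ _ ≤ μ ({ω : Ω | L i ω < -Δ} ∪ ⋃ j, {ω : Ω | c < L j ω}) := measure_mono hincl
    _ ≤ μ {ω : Ω | L i ω < -Δ} + μ (⋃ j, {ω : Ω | c < L j ω}) := measure_union_le _ _
    _ ≤ μ {ω : Ω | L i ω < -Δ} + ∑ j, μ {ω : Ω | c < L j ω} := by
        gcongr
        exact measure_iUnion_fintype_le _ _
    _ = ENNReal.ofReal (δ / (4 * k)) + ∑ _j : Fin k, ENNReal.ofReal (δ / (4 * k ^ 2)) := by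
        rw [hμA]; congr 1; exact Finset.sum_congr rfl fun j _ => hμB j
    _ = ENNReal.ofReal (δ / (4 * k)) + (k : ENNReal) * ENNReal.ofReal (δ / (4 * k ^ 2)) := by
        rw [Finset.sum_const, Finset.card_univ, Fintype.card_fin, nsmul_eq_mul]
    _ = ENNReal.ofReal (δ / (4 * k) + (k : ℝ) * (δ / (4 * k ^ 2))) := by
        rw [ENNReal.ofReal_add (by positivity) (by positivity), ← ENNReal.ofReal_natCast k,
          ← ENNReal.ofReal_mul (by positivity)]
    _ ≤ ENNReal.ofReal (δ / k) := by
        apply ENNReal.ofReal_le_ofReal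
        have : δ / (4 * (k:ℝ)) + (k : ℝ) * (δ / (4 * (k:ℝ) ^ 2)) = δ / (2 * k) := by
          field_simp; ring
        rw [this]
        rw [div_le_div_iff₀ (by positivity) hkpos]
        nlinarith
end

section
/- Let 0 ≤ x_a ≤ x_b be real numbers, let ε > 0, and let Z_a, Z_b be independent identically distributed random variables each with the Laplace distribution of location 0 and scale 1/ε. Let S be a random variable independent of (Z_a, Z_b) with S > 0 almost surely and S ≥ 0. Define the rounded noisy counts Y_a = max(x_a + Z_a, 0) and Y_b = max(x_b + Z_b, 0). Then E[Y_a / (Y_a + Y_b + S)] ≤ E[Y_b / (Y_a + Y_b + S)]. That is, under the Laplace mechanism with rounding of negative counts to zero, in expectation a district with fewer eligible students receives an allocation share no larger than that of a district with more eligible students. -/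
open MeasureTheory ProbabilityTheory

lemma key_pointwise (A B C D s : ℝ) (hA : 0 ≤ A) (hB : 0 ≤ B) (hC : 0 ≤ C) (hD : 0 ≤ D)
    (hAD : A ≤ D) (hCB : C ≤ B) (hs : 0 < s) :
    A / (A + B + s) + C / (C + D + s) ≤ B / (A + B + s) + D / (C + D + s) := by
  have hP : (0:ℝ) < A + B + s := by positivity
  have hQ : (0:ℝ) < C + D + s := by positivity
  rw [div_add_div _ _ hP.ne' hQ.ne', div_add_div _ _ hP.ne' hQ.ne',
    div_le_div_iff₀ (by positivity) (by positivity)]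
  have h1 : 0 ≤ s * (B - C) := mul_nonneg hs.le (sub_nonneg.2 hCB)
  have h2 : 0 ≤ s * (D - A) := mul_nonneg hs.le (sub_nonneg.2 hAD)
  have h3 : A * C ≤ D * B := mul_le_mul hAD hCB hC hD
  nlinarith [mul_pos hP hQ, sq_nonneg (A - D), sq_nonneg (B - C)]

/-- under the Laplace mechanism with rounding of negative counts to
zero, in expectation a district with fewer eligible students receives an allocation
share no larger than that of a district with more eligible students:
`E[Y_a / (Y_a + Y_b + S)] ≤ E[Y_b / (Y_a + Y_b + S)]` where
`Y_a = max (x_a + Z_a) 0`, `Y_b = max (x_b + Z_b) 0`. -/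
theorem no_inversion_laplace
    {Ω : Type*} [MeasurableSpace Ω] (μ : Measure Ω) [IsProbabilityMeasure μ]
    (ε : ℝ) (hε : 0 < ε) (xa xb : ℝ) (hxa : 0 ≤ xa) (hab : xa ≤ xb)
    (Za Zb S : Ω → ℝ) (hZa : Measurable Za) (hZb : Measurable Zb) (hSmeas : Measurable S)
    (hmapa : μ.map Za = laplaceMeasure (1 / ε))
    (hmapb : μ.map Zb = laplaceMeasure (1 / ε))
    (hindepZ : IndepFun Za Zb μ)
    (hindepS : IndepFun (fun ω => (Za ω, Zb ω)) S μ)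
    (hS0 : ∀ ω, 0 ≤ S ω) (hSpos : ∀ᵐ ω ∂μ, 0 < S ω) :
    ∫ ω, max (xa + Za ω) 0 / (max (xa + Za ω) 0 + max (xb + Zb ω) 0 + S ω) ∂μ
      ≤ ∫ ω, max (xb + Zb ω) 0 / (max (xa + Za ω) 0 + max (xb + Zb ω) 0 + S ω) ∂μ := by
  -- the two pushforward maps to (ℝ × ℝ) × ℝ
  set T : Ω → (ℝ × ℝ) × ℝ := fun ω => ((Za ω, Zb ω), S ω) with hTdef
  set T' : Ω → (ℝ × ℝ) × ℝ := fun ω => ((Zb ω, Za ω), S ω) with hT'def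
  have hTmeas : Measurable T := (hZa.prodMk hZb).prodMk hSmeas
  have hT'meas : Measurable T' := (hZb.prodMk hZa).prodMk hSmeas
  have hjoint : μ.map (fun ω => (Za ω, Zb ω)) = μ.map (fun ω => (Zb ω, Za ω)) := by
    rw [(indepFun_iff_map_prod_eq_prod_map_map hZa.aemeasurable hZb.aemeasurable).mp hindepZ,
      (indepFun_iff_map_prod_eq_prod_map_map hZb.aemeasurable hZa.aemeasurable).mp hindepZ.symm,
      hmapa, hmapb]
  have hindepS' : IndepFun (fun ω => (Zb ω, Za ω)) S μ := by
    have := hindepS.comp measurable_swap measurable_id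
    exact this
  have hT : μ.map T = μ.map T' := by
    rw [(indepFun_iff_map_prod_eq_prod_map_map (hZa.prodMk hZb).aemeasurable
        hSmeas.aemeasurable).mp hindepS,
      (indepFun_iff_map_prod_eq_prod_map_map (hZb.prodMk hZa).aemeasurable
        hSmeas.aemeasurable).mp hindepS', hjoint]
  -- the two score functions
  set g₁ : (ℝ × ℝ) × ℝ → ℝ :=
    fun p => max (xa + p.1.1) 0 / (max (xa + p.1.1) 0 + max (xb + p.1.2) 0 + p.2) with hg₁def
  set g₂ : (ℝ × ℝ) × ℝ → ℝ :=
    fun p => max (xb + p.1.2) 0 / (max (xa + p.1.1) 0 + max (xb + p.1.2) 0 + p.2) with hg₂def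
  have hm1 : Measurable fun p : (ℝ × ℝ) × ℝ => max (xa + p.1.1) 0 :=
    (measurable_fst.fst.const_add xa).max measurable_const
  have hm2 : Measurable fun p : (ℝ × ℝ) × ℝ => max (xb + p.1.2) 0 :=
    (measurable_fst.snd.const_add xb).max measurable_const
  have hmg₁ : Measurable g₁ := hm1.div ((hm1.add hm2).add measurable_snd)
  have hmg₂ : Measurable g₂ := hm2.div ((hm1.add hm2).add measurable_snd)
  -- swap identities of integrals
  have key1 : ∫ ω, g₁ (T ω) ∂μ = ∫ ω, g₁ (T' ω) ∂μ := by
    rw [← integral_map hTmeas.aemeasurable hmg₁.aestronglyMeasurable, hT,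
      integral_map hT'meas.aemeasurable hmg₁.aestronglyMeasurable]
  have key2 : ∫ ω, g₂ (T ω) ∂μ = ∫ ω, g₂ (T' ω) ∂μ := by
    rw [← integral_map hTmeas.aemeasurable hmg₂.aestronglyMeasurable, hT,
      integral_map hT'meas.aemeasurable hmg₂.aestronglyMeasurable]
  -- integrability
  have hinteg : ∀ f : Ω → ℝ, Measurable f → (∀ ω, 0 ≤ f ω) → (∀ ω, f ω ≤ 1) →
      Integrable f μ := fun f hf h0 h1 =>
    (integrable_const (1:ℝ)).mono' hf.aestronglyMeasurable
      (Filter.Eventually.of_forall fun ω => by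
        rw [Real.norm_eq_abs, abs_of_nonneg (h0 ω)]; exact h1 ω)
  have hbound : ∀ (g : (ℝ × ℝ) × ℝ → ℝ), (g = g₁ ∨ g = g₂) →
      ∀ p : (ℝ × ℝ) × ℝ, 0 ≤ p.2 → 0 ≤ g p ∧ g p ≤ 1 := by
    rintro g (rfl | rfl) p hp2 <;>
    · constructor
      · apply div_nonneg (le_max_right _ _)
        have := le_max_right (xa + p.1.1) 0
        have := le_max_right (xb + p.1.2) 0
        linarith
      · apply div_le_one_of_le₀
        · have := le_max_right (xa + p.1.1) 0
          have := le_max_right (xb + p.1.2) 0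
          linarith
        · have := le_max_right (xa + p.1.1) 0
          have := le_max_right (xb + p.1.2) 0
          linarith
  have hiA : Integrable (fun ω => g₁ (T ω)) μ :=
    hinteg _ (hmg₁.comp hTmeas) (fun ω => (hbound g₁ (Or.inl rfl) (T ω) (hS0 ω)).1)
      (fun ω => (hbound g₁ (Or.inl rfl) (T ω) (hS0 ω)).2)
  have hiB : Integrable (fun ω => g₂ (T ω)) μ :=
    hinteg _ (hmg₂.comp hTmeas) (fun ω => (hbound g₂ (Or.inr rfl) (T ω) (hS0 ω)).1)
      (fun ω => (hbound g₂ (Or.inr rfl) (T ω) (hS0 ω)).2)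
  have hiC : Integrable (fun ω => g₁ (T' ω)) μ :=
    hinteg _ (hmg₁.comp hT'meas) (fun ω => (hbound g₁ (Or.inl rfl) (T' ω) (hS0 ω)).1)
      (fun ω => (hbound g₁ (Or.inl rfl) (T' ω) (hS0 ω)).2)
  have hiD : Integrable (fun ω => g₂ (T' ω)) μ :=
    hinteg _ (hmg₂.comp hT'meas) (fun ω => (hbound g₂ (Or.inr rfl) (T' ω) (hS0 ω)).1)
      (fun ω => (hbound g₂ (Or.inr rfl) (T' ω) (hS0 ω)).2)
  -- a.e. pointwise inequality
  have hae : ∀ᵐ ω ∂μ, g₁ (T ω) + g₁ (T' ω) ≤ g₂ (T ω) + g₂ (T' ω) := by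
    filter_upwards [hSpos] with ω hs
    have hAD : max (xa + Za ω) 0 ≤ max (xb + Za ω) 0 :=
      max_le_max (by linarith) le_rfl
    have hCB : max (xa + Zb ω) 0 ≤ max (xb + Zb ω) 0 :=
      max_le_max (by linarith) le_rfl
    exact key_pointwise (max (xa + Za ω) 0) (max (xb + Zb ω) 0) (max (xa + Zb ω) 0)
      (max (xb + Za ω) 0) (S ω) (le_max_right _ _) (le_max_right _ _) (le_max_right _ _)
      (le_max_right _ _) hAD hCB hs
  have hsum : ∫ ω, (g₁ (T ω) + g₁ (T' ω)) ∂μ ≤ ∫ ω, (g₂ (T ω) + g₂ (T' ω)) ∂μ :=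
    integral_mono_ae (hiA.add hiC) (hiB.add hiD) hae
  rw [integral_add hiA hiC, integral_add hiB hiD] at hsum
  have goal_eq : ∫ ω, g₁ (T ω) ∂μ ≤ ∫ ω, g₂ (T ω) ∂μ := by linarith [key1, key2, hsum]
  exact goal_eq
end
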